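/- arXiv:1112.4635 — 2 statements merged into one kernel-verified Lean document; each statement's English description precedes it below -/
import Mathlib

section
/- Let c₀ > 0, 4k > c₀², ω := √(4k - c₀²)/2, and σ_z²(t) := (1/ω²)·∫₀ᵗ e^{-c₀s}·sin²(ωs) ds. Then as t → 0, σ_z²(t) = t³/3 - c₀·t⁴/4 + o(t⁴). -/
open Real Filter Asymptotics MeasureTheory intervalIntegral

theorem sigma_z_sq_expansion (c₀ k : ℝ) (hc : 0 < c₀) (h4k : c₀ ^ 2 < 4 * k)
    (ω : ℝ) (hω : ω = Real.sqrt (4 * k - c₀ ^ 2) / 2)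
    (σz2 : ℝ → ℝ)
    (hσ : ∀ t, σz2 t = 1 / ω ^ 2 * ∫ s in (0 : ℝ)..t, Real.exp (-c₀ * s) * Real.sin (ω * s) ^ 2) :
    (fun t => σz2 t - (t ^ 3 / 3 - c₀ * t ^ 4 / 4)) =o[nhds 0] fun t => t ^ 4 := by
  have hωpos : 0 < ω := by
    have h1 : 0 < 4 * k - c₀ ^ 2 := by linarith
    have := Real.sqrt_pos.mpr h1
    rw [hω]; linarith
  set h : ℝ → ℝ := fun s => Real.exp (-c₀ * s) * Real.sin (ω * s) ^ 2 / ω ^ 2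
    - s ^ 2 + c₀ * s ^ 3 with hhdef
  have hcont : Continuous h := by
    apply Continuous.add
    · apply Continuous.sub
      · exact ((Real.continuous_exp.comp (continuous_const.mul continuous_id)).mul
          ((Real.continuous_sin.comp (continuous_const.mul continuous_id)).pow 2)).div_const _
      · exact continuous_pow 2
    · exact continuous_const.mul (continuous_pow 3)
  set δ₀ : ℝ := min (1 / ω) (1 / c₀) with hδ₀def
  have hδ₀pos : 0 < δ₀ := lt_min (by positivity) (by positivity)
  set C : ℝ := c₀ ^ 2 + 9 * ω ^ 2 with hCdef
  have hCpos : 0 < C := by positivity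
  clear_value h δ₀ C
  -- key pointwise bound
  have key : ∀ s : ℝ, |s| ≤ δ₀ → |h s| ≤ C * s ^ 4 := by
    intro s hs
    have hx1 : |ω * s| ≤ 1 := by
      rw [abs_mul, abs_of_pos hωpos]
      have hs1 : |s| ≤ 1 / ω := le_trans hs (by rw [hδ₀def]; exact min_le_left _ _)
      calc ω * |s| ≤ ω * (1 / ω) := mul_le_mul_of_nonneg_left hs1 hωpos.le
        _ = 1 := by field_simp
    have hy1 : |(-c₀) * s| ≤ 1 := by
      rw [abs_mul, abs_neg, abs_of_pos hc]
      have h2 : |s| ≤ 1 / c₀ := le_trans hs (by rw [hδ₀def]; exact min_le_right _ _)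
      calc c₀ * |s| ≤ c₀ * (1 / c₀) := mul_le_mul_of_nonneg_left h2 hc.le
        _ = 1 := by field_simp
    set x : ℝ := ω * s with hxdef
    -- sine bounds
    have hsb := Real.sin_bound hx1
    have hx43 : |x| ^ 4 ≤ |x| ^ 3 := pow_le_pow_of_le_one (abs_nonneg _) hx1 (by norm_num)
    have hx31 : |x| ^ 3 ≤ |x| := by
      calc |x| ^ 3 ≤ |x| ^ 1 := pow_le_pow_of_le_one (abs_nonneg _) hx1 (by norm_num)
        _ = |x| := pow_one _
    have hsin3 : |Real.sin x - x| ≤ |x| ^ 3 := by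
      have t1 : |Real.sin x - x| ≤ |Real.sin x - (x - x ^ 3 / 6)| + |x ^ 3 / 6| := by
        rw [show Real.sin x - x = (Real.sin x - (x - x ^ 3 / 6)) + (-(x ^ 3 / 6)) by ring]
        exact (abs_add_le _ _).trans (by rw [abs_neg])
      have h6 : |x ^ 3 / 6| = |x| ^ 3 / 6 := by rw [abs_div, abs_pow]; norm_num
      rw [h6] at t1
      linarith [pow_nonneg (abs_nonneg x) 3, pow_le_pow_of_le_one (abs_nonneg x) hx1 (by norm_num : 3 ≤ 5)]
    have hsum : |Real.sin x + x| ≤ 3 * |x| := by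
      have t1 : |Real.sin x + x| ≤ |Real.sin x - x| + |2 * x| := by
        rw [show Real.sin x + x = (Real.sin x - x) + 2 * x by ring]
        exact abs_add_le _ _
      have h2 : |2 * x| = 2 * |x| := by rw [abs_mul]; norm_num
      rw [h2] at t1
      linarith [hsin3.trans hx31]
    have hQx : |Real.sin x ^ 2 - x ^ 2| ≤ 3 * |x| ^ 4 := by
      rw [show Real.sin x ^ 2 - x ^ 2 = (Real.sin x - x) * (Real.sin x + x) by ring, abs_mul]
      calc |Real.sin x - x| * |Real.sin x + x| ≤ |x| ^ 3 * (3 * |x|) :=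
            mul_le_mul hsin3 hsum (abs_nonneg _) (by positivity)
        _ = 3 * |x| ^ 4 := by ring
    have hx4 : |x| ^ 4 = ω ^ 4 * s ^ 4 := by
      rw [← abs_pow, abs_of_nonneg (by positivity : (0:ℝ) ≤ x ^ 4), hxdef]; ring
    -- Q bound
    set Q : ℝ := Real.sin x ^ 2 / ω ^ 2 - s ^ 2 with hQdef
    have hQ : |Q| ≤ 3 * ω ^ 2 * s ^ 4 := by
      have : Q = (Real.sin x ^ 2 - x ^ 2) / ω ^ 2 := by
        rw [hQdef, hxdef]; field_simp
      rw [this, abs_div, abs_of_pos (by positivity : (0:ℝ) < ω ^ 2)]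
      rw [div_le_iff₀ (by positivity : (0:ℝ) < ω ^ 2)]
      calc |Real.sin x ^ 2 - x ^ 2| ≤ 3 * |x| ^ 4 := hQx
        _ = 3 * (ω ^ 4 * s ^ 4) := by rw [hx4]
        _ = 3 * ω ^ 2 * s ^ 4 * ω ^ 2 := by ring
    -- exp bounds
    have hA : |Real.exp (-c₀ * s) - 1 - (-c₀ * s)| ≤ c₀ ^ 2 * s ^ 2 := by
      have := Real.abs_exp_sub_one_sub_id_le (x := -c₀ * s) (by rwa [neg_mul] at hy1 ⊢)
      calc |Real.exp (-c₀ * s) - 1 - (-c₀ * s)| ≤ (-c₀ * s) ^ 2 := this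
        _ = c₀ ^ 2 * s ^ 2 := by ring
    have hE : Real.exp (-c₀ * s) ≤ 3 := by
      have h1 : -c₀ * s ≤ 1 := (le_abs_self _).trans hy1
      calc Real.exp (-c₀ * s) ≤ Real.exp 1 := Real.exp_le_exp.mpr h1
        _ ≤ 3 := by linarith [Real.exp_one_lt_d9]
    have hEpos : 0 < Real.exp (-c₀ * s) := Real.exp_pos _
    -- combine
    have hdecomp : h s = (Real.exp (-c₀ * s) - 1 - (-c₀ * s)) * s ^ 2
        + Real.exp (-c₀ * s) * Q := by
      rw [hhdef, hQdef, hxdef]; ring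
    rw [hdecomp]
    calc |(Real.exp (-c₀ * s) - 1 - (-c₀ * s)) * s ^ 2 + Real.exp (-c₀ * s) * Q|
        ≤ |(Real.exp (-c₀ * s) - 1 - (-c₀ * s)) * s ^ 2| + |Real.exp (-c₀ * s) * Q| :=
          abs_add_le _ _
      _ = |Real.exp (-c₀ * s) - 1 - (-c₀ * s)| * s ^ 2 + Real.exp (-c₀ * s) * |Q| := by
          rw [abs_mul, abs_mul, abs_of_pos hEpos, abs_pow, sq_abs]
      _ ≤ c₀ ^ 2 * s ^ 2 * s ^ 2 + 3 * (3 * ω ^ 2 * s ^ 4) := by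
          have h1 := mul_le_mul_of_nonneg_right hA (sq_nonneg s)
          have h2 : Real.exp (-c₀ * s) * |Q| ≤ 3 * (3 * ω ^ 2 * s ^ 4) :=
            mul_le_mul hE hQ (abs_nonneg _) (by norm_num)
          linarith
      _ = C * s ^ 4 := by rw [hCdef]; ring
  -- rewrite difference as integral of h
  have hgt : ∀ t : ℝ, σz2 t - (t ^ 3 / 3 - c₀ * t ^ 4 / 4) = ∫ s in (0:ℝ)..t, h s := by
    intro t
    have hf : Continuous fun s => Real.exp (-c₀ * s) * Real.sin (ω * s) ^ 2 / ω ^ 2 :=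
      ((Real.continuous_exp.comp (continuous_const.mul continuous_id)).mul
        ((Real.continuous_sin.comp (continuous_const.mul continuous_id)).pow 2)).div_const _
    have hi1 : IntervalIntegrable (fun s => Real.exp (-c₀ * s) * Real.sin (ω * s) ^ 2 / ω ^ 2)
        volume 0 t := hf.intervalIntegrable _ _
    have hi2 : IntervalIntegrable (fun s : ℝ => s ^ 2 - c₀ * s ^ 3) volume 0 t :=
      ((continuous_pow 2).sub (continuous_const.mul (continuous_pow 3))).intervalIntegrable _ _
    have e1 : σz2 t = ∫ s in (0:ℝ)..t, Real.exp (-c₀ * s) * Real.sin (ω * s) ^ 2 / ω ^ 2 := by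
      rw [hσ t, one_div, inv_mul_eq_div, ← intervalIntegral.integral_div]
    have e2 : (∫ s in (0:ℝ)..t, (s ^ 2 - c₀ * s ^ 3)) = t ^ 3 / 3 - c₀ * t ^ 4 / 4 := by
      rw [intervalIntegral.integral_sub ((continuous_pow 2).intervalIntegrable _ _)
        ((by fun_prop : Continuous fun s : ℝ => c₀ * s ^ 3).intervalIntegrable _ _),
        intervalIntegral.integral_const_mul, integral_pow, integral_pow]
      norm_num
      ring
    rw [e1, ← e2, ← intervalIntegral.integral_sub hi1 hi2]
    congr 1; funext s; rw [hhdef]; ring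
  -- conclude littleO
  rw [isLittleO_iff]
  intro ε hε
  have hδpos : 0 < min δ₀ (5 * ε / C) := lt_min hδ₀pos (by positivity)
  have hev : ∀ᶠ t in nhds (0:ℝ), |t| ≤ min δ₀ (5 * ε / C) := by
    have := Metric.closedBall_mem_nhds (0:ℝ) hδpos
    filter_upwards [this] with t ht
    simpa [Real.dist_eq] using ht
  filter_upwards [hev] with t ht
  rw [hgt t]
  have ht1 : |t| ≤ δ₀ := ht.trans (min_le_left _ _)
  have ht2 : |t| ≤ 5 * ε / C := ht.trans (min_le_right _ _)
  have hbound : ‖∫ s in (0:ℝ)..t, h s‖ ≤ |∫ s in (0:ℝ)..t, C * s ^ 4| := by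
    apply intervalIntegral.norm_integral_le_abs_of_norm_le
    · refine (MeasureTheory.ae_restrict_iff' measurableSet_uIoc).mpr (ae_of_all _ ?_)
      intro s hs
      have habs : |s| ≤ |t| := by
        rw [Set.mem_uIoc] at hs
        rcases hs with ⟨h1, h2⟩ | ⟨h1, h2⟩
        · rw [abs_le]; constructor <;> [linarith [abs_nonneg t]; linarith [le_abs_self t]]
        · rw [abs_le]; constructor <;> [linarith [neg_abs_le t]; linarith [abs_nonneg t]]
      exact key s (habs.trans ht1)
    · exact (continuous_const.mul (continuous_pow 4)).intervalIntegrable _ _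
  have hcomp : (∫ s in (0:ℝ)..t, C * s ^ 4) = C * (t ^ 5 / 5) := by
    rw [intervalIntegral.integral_const_mul, integral_pow]; norm_num
  calc ‖∫ s in (0:ℝ)..t, h s‖ ≤ |∫ s in (0:ℝ)..t, C * s ^ 4| := hbound
    _ = C * |t| ^ 5 / 5 := by
        rw [hcomp, abs_mul, abs_of_pos hCpos, abs_div, abs_pow]; norm_num; ring
    _ = C * |t| * t ^ 4 / 5 := by
        have h5 : |t| ^ 5 = |t| * t ^ 4 := by
          rw [show (5:ℕ) = 1 + 4 from rfl, pow_add, pow_one, ← abs_pow,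
            abs_of_nonneg (by positivity : (0:ℝ) ≤ t ^ 4)]
        rw [h5]; ring
    _ ≤ ε * ‖t ^ 4‖ := by
        have h4 : (0:ℝ) ≤ t ^ 4 := by positivity
        rw [Real.norm_eq_abs, abs_of_nonneg h4]
        have : C * |t| ≤ 5 * ε := by
          calc C * |t| ≤ C * (5 * ε / C) := mul_le_mul_of_nonneg_left ht2 hCpos.le
            _ = 5 * ε := by field_simp
        have h6 : C * |t| * t ^ 4 ≤ 5 * ε * t ^ 4 := mul_le_mul_of_nonneg_right this h4
        linarith only [h6]
end

section
/- Let c₀ > 0, 4k > c₀², ω := √(4k - c₀²)/2, σ_y²(t) := ∫₀ᵗ e^{-c₀s}(cos(ωs) - (c₀/(2ω))sin(ωs))² ds, σ_z²(t) := (1/ω²)∫₀ᵗ e^{-c₀s} sin²(ωs) ds, and σ_{yz}(t) := (1/(2ω²)) e^{-c₀t} sin²(ωt). Then the correlation ρ(t) := σ_{yz}(t)/(σ_y(t)·σ_z(t)) satisfies ρ(t) → √3/2 as t → 0⁺, and more precisely ρ(t) = (√3/2)(1 - (c₀/8)t + o(t)). -/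
open Real Filter Asymptotics

lemma integral_o (φ : ℝ → ℝ) (hφc : Continuous φ) (hφ0 : φ 0 = 0) (n : ℕ)
    (h : φ =o[nhdsWithin (0:ℝ) (Set.Ioi 0)] fun s => s ^ n) :
    (fun t => ∫ s in (0:ℝ)..t, φ s) =o[nhdsWithin (0:ℝ) (Set.Ioi 0)] fun t => t ^ (n+1) := by
  rw [isLittleO_iff] at h ⊢
  intro ε hε
  have hb := h hε
  rw [eventually_nhdsWithin_iff, Metric.eventually_nhds_iff] at hb
  obtain ⟨δ, hδ, hbd⟩ := hb
  filter_upwards [Ioo_mem_nhdsGT hδ] with t ht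
  have h0t : (0:ℝ) ≤ t := le_of_lt ht.1
  have hbound : ∀ s ∈ Set.Icc (0:ℝ) t, |φ s| ≤ ε * s ^ n := by
    intro s hs
    rcases eq_or_lt_of_le hs.1 with rfl | hs0
    · simp [hφ0]; positivity
    · have := hbd (y := s) (by
        rw [Real.dist_eq, sub_zero, abs_of_nonneg (le_of_lt hs0)]
        exact lt_of_le_of_lt hs.2 ht.2) hs0
      simpa [abs_of_nonneg (le_of_lt hs0), abs_of_nonneg (pow_nonneg (le_of_lt hs0) n)] using this
  have habs : |∫ s in (0:ℝ)..t, φ s| ≤ ∫ s in (0:ℝ)..t, |φ s| :=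
    intervalIntegral.abs_integral_le_integral_abs h0t
  have hmono : (∫ s in (0:ℝ)..t, |φ s|) ≤ ∫ s in (0:ℝ)..t, ε * s ^ n := by
    apply intervalIntegral.integral_mono_on h0t (hφc.abs.intervalIntegrable _ _)
      ((continuous_const.mul (continuous_pow n)).intervalIntegrable _ _)
    exact hbound
  have hval : (∫ s in (0:ℝ)..t, ε * s ^ n) = ε * (t ^ (n+1) / (n+1)) := by
    rw [intervalIntegral.integral_const_mul, integral_pow]; ring
  have : ‖∫ s in (0:ℝ)..t, φ s‖ ≤ ε * (t ^ (n+1) / (n+1)) := by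
    rw [Real.norm_eq_abs, ← hval]; exact habs.trans hmono
  refine this.trans ?_
  rw [Real.norm_eq_abs, abs_of_nonneg (pow_nonneg h0t _)]
  have h1 : t ^ (n+1) / (n+1) ≤ t ^ (n+1) := by
    apply div_le_self (pow_nonneg h0t _); exact_mod_cast Nat.succ_le_succ (Nat.zero_le n)
  nlinarith [pow_nonneg h0t (n+1)]

lemma pow_oblig {m n : ℕ} (h : n ≤ m) :
    (fun t : ℝ => t ^ m) =O[nhdsWithin (0:ℝ) (Set.Ioi 0)] fun t => t ^ n := by
  rw [isBigO_iff]
  refine ⟨1, ?_⟩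
  filter_upwards [Ioo_mem_nhdsGT one_pos] with t ht
  rw [one_mul, Real.norm_eq_abs, Real.norm_eq_abs, abs_of_nonneg (pow_nonneg ht.1.le _),
    abs_of_nonneg (pow_nonneg ht.1.le _)]
  exact pow_le_pow_of_le_one ht.1.le ht.2.le h

lemma pow_olittle {m n : ℕ} (h : n < m) :
    (fun t : ℝ => t ^ m) =o[nhdsWithin (0:ℝ) (Set.Ioi 0)] fun t => t ^ n := by
  have h1 : (fun t : ℝ => t ^ (n+1)) =o[nhdsWithin (0:ℝ) (Set.Ioi 0)] fun t => t ^ n := by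
    have ht : Tendsto (fun t : ℝ => t) (nhdsWithin (0:ℝ) (Set.Ioi 0)) (nhds 0) :=
      tendsto_id.mono_left nhdsWithin_le_nhds
    have := (isBigO_refl (fun t : ℝ => t ^ n) (nhdsWithin (0:ℝ) (Set.Ioi 0))).mul_isLittleO
      ((isLittleO_one_iff ℝ).2 ht)
    exact this.congr (fun t => by ring) (fun t => by ring)
  exact (pow_oblig h).trans_isLittleO h1

set_option maxHeartbeats 1000000 in
theorem rho_expansion (c₀ k : ℝ) (hc : 0 < c₀) (h4k : c₀ ^ 2 < 4 * k)
    (ω : ℝ) (hω : ω = Real.sqrt (4 * k - c₀ ^ 2) / 2)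
    (σy σz σyz ρ : ℝ → ℝ)
    (hσy : ∀ t, σy t = Real.sqrt (∫ s in (0 : ℝ)..t,
      Real.exp (-c₀ * s) * (Real.cos (ω * s) - c₀ / (2 * ω) * Real.sin (ω * s)) ^ 2))
    (hσz : ∀ t, σz t = Real.sqrt (1 / ω ^ 2 * ∫ s in (0 : ℝ)..t,
      Real.exp (-c₀ * s) * Real.sin (ω * s) ^ 2))
    (hσyz : ∀ t, σyz t = 1 / (2 * ω ^ 2) * Real.exp (-c₀ * t) * Real.sin (ω * t) ^ 2)
    (hρ : ∀ t, ρ t = σyz t / (σy t * σz t)) :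
    Tendsto ρ (nhdsWithin 0 (Set.Ioi 0)) (nhds (Real.sqrt 3 / 2)) ∧
    (fun t => ρ t - Real.sqrt 3 / 2 * (1 - c₀ / 8 * t))
      =o[nhdsWithin 0 (Set.Ioi 0)] fun t => t := by
  set l := nhdsWithin (0:ℝ) (Set.Ioi 0) with hl
  have hω0 : 0 < ω := by
    rw [hω]
    have : 0 < 4 * k - c₀ ^ 2 := by linarith
    positivity
  have hωne : ω ≠ 0 := ne_of_gt hω0
  set gy : ℝ → ℝ := fun s => Real.exp (-c₀ * s) *
    (Real.cos (ω * s) - c₀ / (2 * ω) * Real.sin (ω * s)) ^ 2 with hgydef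
  set A : ℝ → ℝ := fun t => ∫ s in (0:ℝ)..t, gy s with hAdef
  set B : ℝ → ℝ := fun t => 1 / ω ^ 2 * ∫ s in (0:ℝ)..t,
    Real.exp (-c₀ * s) * Real.sin (ω * s) ^ 2 with hBdef
  -- exp first order expansion
  have hvlin : HasDerivAt (fun s : ℝ => -c₀ * s) (-c₀) 0 := by
    simpa using (hasDerivAt_id (0:ℝ)).const_mul (-c₀)
  have hvE : HasDerivAt (fun s : ℝ => Real.exp (-c₀ * s)) (-c₀) 0 := by
    simpa using hvlin.exp
  have hE : (fun s : ℝ => Real.exp (-c₀ * s) - 1 + c₀ * s) =o[l] fun s => s := by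
    have h1 := hasDerivAt_iff_isLittleO.mp hvE
    have h2 := h1.mono (nhdsWithin_le_nhds : l ≤ nhds 0)
    exact h2.congr (fun s => by simp [smul_eq_mul]; ring) (fun s => by simp)
  -- gy first order expansion
  have hgy : (fun s : ℝ => gy s - (1 - 2 * c₀ * s)) =o[l] fun s => s := by
    have hu : HasDerivAt (fun s : ℝ => ω * s) ω 0 := by
      simpa using (hasDerivAt_id (0:ℝ)).const_mul ω
    have hin : HasDerivAt (fun s : ℝ => Real.cos (ω * s) - c₀ / (2 * ω) * Real.sin (ω * s))
        (-Real.sin (ω * 0) * ω - c₀ / (2 * ω) * (Real.cos (ω * 0) * ω)) 0 :=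
      hu.cos.sub ((hu.sin).const_mul _)
    have hg := hvE.mul (hin.pow 2)
    have hg2 : HasDerivAt gy (-(2 * c₀)) 0 := by
      convert hg using 1
      all_goals try rfl
      simp only [Pi.pow_apply, mul_zero, Real.sin_zero, Real.cos_zero, Real.exp_zero]
      field_simp
      ring
    have h1 := hasDerivAt_iff_isLittleO.mp hg2
    have h2 := h1.mono (nhdsWithin_le_nhds : l ≤ nhds 0)
    refine h2.congr (fun s => ?_) (fun s => by simp)
    simp only [hgydef, smul_eq_mul, mul_zero, Real.sin_zero, Real.cos_zero, Real.exp_zero]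
    ring
  -- sin squared fourth order bound
  have hS : (fun s : ℝ => Real.exp (-c₀ * s) * (Real.sin (ω * s) ^ 2 / ω ^ 2 - s ^ 2))
      =o[l] fun s => s ^ 3 := by
    have hbig : (fun s : ℝ => Real.exp (-c₀ * s) * (Real.sin (ω * s) ^ 2 / ω ^ 2 - s ^ 2))
        =O[l] fun s => s ^ 4 := by
      rw [isBigO_iff]
      refine ⟨ω ^ 2, ?_⟩
      filter_upwards [Ioo_mem_nhdsGT (by positivity : (0:ℝ) < 1/ω)]
        with t ht
      obtain ⟨ht0, ht1⟩ := ht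
      have hx0 : 0 < ω * t := by positivity
      have hx1 : ω * t ≤ 1 := by
        have h := mul_lt_mul_of_pos_left ht1 hω0
        rw [mul_one_div, div_self hωne] at h
        exact h.le
      have s1 : Real.sin (ω * t) < ω * t := Real.sin_lt hx0
      have s2 : ω * t - (ω * t) ^ 3 / 4 < Real.sin (ω * t) := by
        linarith [Real.sin_gt_sub_cube hx0, pow_pos hx0 3]
      have hx3 : (ω * t) ^ 3 ≤ ω * t := by
        nlinarith [mul_nonneg hx0.le (sub_nonneg.2 hx1),
          mul_nonneg (mul_nonneg hx0.le hx0.le) (sub_nonneg.2 hx1)]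
      have hspos : 0 < Real.sin (ω * t) := by nlinarith
      have hsq : |Real.sin (ω * t) ^ 2 - (ω * t) ^ 2| ≤ (ω * t) ^ 4 / 2 := by
        rw [abs_le]
        constructor
        · nlinarith [sq_nonneg (ω * t - Real.sin (ω * t))]
        · nlinarith
      have hexple : Real.exp (-c₀ * t) ≤ 1 := by
        rw [Real.exp_le_one_iff]; nlinarith
      have hexppos : 0 < Real.exp (-c₀ * t) := Real.exp_pos _
      rw [Real.norm_eq_abs, Real.norm_eq_abs, abs_mul, abs_of_pos hexppos]
      have h3 : |Real.sin (ω * t) ^ 2 / ω ^ 2 - t ^ 2| ≤ ω ^ 2 * t ^ 4 / 2 := by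
        have : Real.sin (ω * t) ^ 2 / ω ^ 2 - t ^ 2
            = (Real.sin (ω * t) ^ 2 - (ω * t) ^ 2) / ω ^ 2 := by field_simp
        rw [this, abs_div, abs_of_pos (by positivity : (0:ℝ) < ω ^ 2), div_le_iff₀ (by positivity)]
        calc |Real.sin (ω * t) ^ 2 - (ω * t) ^ 2| ≤ (ω * t) ^ 4 / 2 := hsq
        _ = ω ^ 2 * t ^ 4 / 2 * ω ^ 2 := by ring
      calc Real.exp (-c₀ * t) * |Real.sin (ω * t) ^ 2 / ω ^ 2 - t ^ 2|
          ≤ 1 * (ω ^ 2 * t ^ 4 / 2) := by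
            apply mul_le_mul hexple h3 (abs_nonneg _) zero_le_one
        _ ≤ ω ^ 2 * |t ^ 4| := by
            rw [abs_of_nonneg (by positivity : (0:ℝ) ≤ t ^ 4)]; nlinarith [pow_nonneg ht0.le 4]
    exact hbig.trans_isLittleO (pow_olittle (by norm_num))
  have hce : Continuous fun s : ℝ => Real.exp (-c₀ * s) :=
    Real.continuous_exp.comp (continuous_const.mul continuous_id)
  have hcs : Continuous fun s : ℝ => Real.sin (ω * s) :=
    Real.continuous_sin.comp (continuous_const.mul continuous_id)
  have hcc : Continuous fun s : ℝ => Real.cos (ω * s) :=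
    Real.continuous_cos.comp (continuous_const.mul continuous_id)
  set φz : ℝ → ℝ := fun s => 1 / ω ^ 2 * (Real.exp (-c₀ * s) * Real.sin (ω * s) ^ 2)
    - (s ^ 2 - c₀ * s ^ 3) with hφzdef
  have hφzc : Continuous φz :=
    (continuous_const.mul (hce.mul (hcs.pow 2))).sub
      ((continuous_pow 2).sub (continuous_const.mul (continuous_pow 3)))
  have hφz : φz =o[l] fun s => s ^ 3 := by
    have h1 : (fun s : ℝ => s ^ 2 * (Real.exp (-c₀ * s) - 1 + c₀ * s)) =o[l] fun s => s ^ 3 :=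
      ((isBigO_refl (fun s : ℝ => s ^ 2) l).mul_isLittleO hE).congr
        (fun s => rfl) (fun s => by ring)
    refine (hS.add h1).congr (fun s => ?_) (fun s => rfl)
    rw [hφzdef]
    field_simp
    ring
  have hgc : Continuous gy := by
    rw [hgydef]
    exact hce.mul ((hcc.sub (continuous_const.mul hcs)).pow 2)
  -- integral asymptotics for A
  have hA : (fun t => A t - (t - c₀ * t ^ 2)) =o[l] fun t => t ^ 2 := by
    have hφAc : Continuous (fun s => gy s - (1 - 2 * c₀ * s)) :=
      hgc.sub (continuous_const.sub (continuous_const.mul continuous_id))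
    have hφA0 : gy 0 - (1 - 2 * c₀ * 0) = 0 := by
      rw [hgydef]; norm_num
    have hint := integral_o _ hφAc hφA0 1 (hgy.congr (fun s => rfl) (fun s => (pow_one s).symm))
    refine hint.congr (fun t => ?_) (fun t => by norm_num)
    rw [intervalIntegral.integral_sub (hgc.intervalIntegrable _ _) (by
      exact (by fun_prop : Continuous fun s:ℝ => 1 - 2*c₀*s).intervalIntegrable _ _)]
    have h2 : (∫ s in (0:ℝ)..t, (1 - 2 * c₀ * s)) = t - c₀ * t ^ 2 := by
      rw [intervalIntegral.integral_sub (continuous_const.intervalIntegrable _ _)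
        ((by fun_prop : Continuous fun s:ℝ => 2*c₀*s).intervalIntegrable _ _),
        intervalIntegral.integral_const, intervalIntegral.integral_const_mul]
      simp [integral_id]
      ring
    rw [h2, hAdef]
  -- integral asymptotics for B
  have hB : (fun t => B t - (t ^ 3 / 3 - c₀ * t ^ 4 / 4)) =o[l] fun t => t ^ 4 := by
    have hφz0 : φz 0 = 0 := by rw [hφzdef]; norm_num
    have hint := integral_o _ hφzc hφz0 3 hφz
    refine hint.congr (fun t => ?_) (fun t => by norm_num)
    rw [hφzdef]
    rw [intervalIntegral.integral_sub
        ((by fun_prop : Continuous fun s : ℝ =>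
          1 / ω ^ 2 * (Real.exp (-c₀ * s) * Real.sin (ω * s) ^ 2)).intervalIntegrable _ _)
        ((by fun_prop : Continuous fun s : ℝ => s ^ 2 - c₀ * s ^ 3).intervalIntegrable _ _),
      intervalIntegral.integral_const_mul]
    have h2 : (∫ s in (0:ℝ)..t, (s ^ 2 - c₀ * s ^ 3)) = t ^ 3 / 3 - c₀ * t ^ 4 / 4 := by
      rw [intervalIntegral.integral_sub ((continuous_pow 2).intervalIntegrable _ _)
        ((by fun_prop : Continuous fun s : ℝ => c₀ * s ^ 3).intervalIntegrable _ _),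
        intervalIntegral.integral_const_mul, integral_pow, integral_pow]
      push_cast
      ring
    rw [h2, hBdef]
  -- asymptotics for σyz
  have hC : (fun t => σyz t - (t ^ 2 / 2 - c₀ * t ^ 3 / 2)) =o[l] fun t => t ^ 3 := by
    refine (hφz.const_mul_left (1/2)).congr (fun t => ?_) (fun t => rfl)
    rw [hσyz t, hφzdef]
    ring
  -- big-O helpers
  have hOpoly : ∀ (m : ℕ) (v : ℝ → ℝ), Continuous v →
      (fun t => t ^ m * v t) =O[l] fun t => t ^ m := by
    intro m v hv
    have h1 : v =O[l] fun _ => (1:ℝ) :=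
      ((hv.tendsto 0).mono_left nhdsWithin_le_nhds).isBigO_one ℝ
    exact ((isBigO_refl (fun t : ℝ => t ^ m) l).mul h1).congr (fun t => rfl) (fun t => by ring)
  have hC0O : (fun t : ℝ => t ^ 2 / 2 - c₀ * t ^ 3 / 2) =O[l] fun t => t ^ 2 :=
    (hOpoly 2 (fun t => 1/2 - c₀/2 * t) (by fun_prop)).congr (fun t => by ring) (fun t => rfl)
  have hCO : σyz =O[l] fun t => t ^ 2 :=
    ((hC.isBigO.trans (pow_oblig (by norm_num))).add hC0O).congr (fun t => by ring) (fun t => rfl)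
  have hB0O : (fun t : ℝ => t ^ 3 / 3 - c₀ * t ^ 4 / 4) =O[l] fun t => t ^ 3 :=
    (hOpoly 3 (fun t => 1/3 - c₀/4 * t) (by fun_prop)).congr (fun t => by ring) (fun t => rfl)
  have hBO : B =O[l] fun t => t ^ 3 :=
    ((hB.isBigO.trans (pow_oblig (by norm_num))).add hB0O).congr (fun t => by ring) (fun t => rfl)
  have hA0O : (fun t : ℝ => t - c₀ * t ^ 2) =O[l] fun t => t :=
    (hOpoly 1 (fun t => 1 - c₀ * t) (by fun_prop)).congr (fun t => by ring) (fun t => by ring)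
  have hPO : (fun t : ℝ => 3/4 - 3 * c₀ / 16 * t) =O[l] fun _ => (1:ℝ) :=
    (((by fun_prop : Continuous fun t : ℝ => 3/4 - 3 * c₀ / 16 * t).tendsto 0).mono_left
      nhdsWithin_le_nhds).isBigO_one ℝ
  -- numerator estimate
  have hN : (fun t => σyz t ^ 2 - (3/4 - 3 * c₀ / 16 * t) * (A t * B t)) =o[l] fun t => t ^ 5 := by
    have T1 : (fun t => (σyz t - (t ^ 2 / 2 - c₀ * t ^ 3 / 2)) *
        (σyz t + (t ^ 2 / 2 - c₀ * t ^ 3 / 2))) =o[l] fun t => t ^ 5 :=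
      (hC.mul_isBigO (hCO.add hC0O)).congr (fun t => rfl) (fun t => by ring)
    have T2 : (fun t : ℝ => (t ^ 2 / 2 - c₀ * t ^ 3 / 2) ^ 2 -
        (3/4 - 3 * c₀ / 16 * t) * ((t - c₀ * t ^ 2) * (t ^ 3 / 3 - c₀ * t ^ 4 / 4)))
        =o[l] fun t => t ^ 5 :=
      ((hOpoly 6 (fun t => -3/64 * c₀ ^ 2 + 3/64 * c₀ ^ 3 * t) (by fun_prop)).congr
        (fun t => by ring) (fun t => rfl)).trans_isLittleO (pow_olittle (by norm_num))
    have T3 : (fun t => (3/4 - 3 * c₀ / 16 * t) * (A t - (t - c₀ * t ^ 2)) * B t)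
        =o[l] fun t => t ^ 5 :=
      ((hPO.mul_isLittleO hA).mul_isBigO hBO).congr (fun t => rfl) (fun t => by ring)
    have T4 : (fun t => (3/4 - 3 * c₀ / 16 * t) * (t - c₀ * t ^ 2) *
        (B t - (t ^ 3 / 3 - c₀ * t ^ 4 / 4))) =o[l] fun t => t ^ 5 :=
      ((hPO.mul hA0O).mul_isLittleO hB).congr (fun t => rfl) (fun t => by ring)
    exact ((T1.add T2).sub (T3.add T4)).congr (fun t => by ring) (fun t => rfl)
  -- eventual lower bounds
  have hδA : ∀ᶠ t in l, t / 2 ≤ A t ∧ t ^ 3 / 6 ≤ B t ∧ 0 < t ∧ t ≤ 1 := by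
    have e1 := hA.def one_pos
    have e2 := hB.def one_pos
    have hd : (0:ℝ) < 1 / (8 * (c₀ + 1)) := by positivity
    filter_upwards [e1, e2, Ioo_mem_nhdsGT hd] with t h1 h2 ht
    obtain ⟨ht0, ht1⟩ := ht
    rw [Real.norm_eq_abs, Real.norm_eq_abs, one_mul,
      abs_of_nonneg (by positivity : (0:ℝ) ≤ t ^ 2)] at h1
    rw [Real.norm_eq_abs, Real.norm_eq_abs, one_mul,
      abs_of_nonneg (by positivity : (0:ℝ) ≤ t ^ 4)] at h2
    rw [abs_le] at h1 h2
    have htb : t * (8 * (c₀ + 1)) < 1 := by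
      have := mul_lt_mul_of_pos_right ht1 (by positivity : (0:ℝ) < 8 * (c₀ + 1))
      rwa [one_div, inv_mul_cancel₀ (by positivity)] at this
    refine ⟨by nlinarith [h1.1, sq_nonneg t], by nlinarith [h2.1, pow_pos ht0 3, pow_pos ht0 4],
      ht0, by nlinarith⟩
  -- quotient expansion
  set q : ℝ → ℝ := fun t => σyz t ^ 2 / (A t * B t) with hqdef
  have hq : (fun t => q t - (3/4 - 3 * c₀ / 16 * t)) =o[l] fun t => t := by
    rw [isLittleO_iff]
    intro ε hε
    have hNb := hN.def (show (0:ℝ) < ε / 12 by positivity)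
    filter_upwards [hNb, hδA] with t hNt hb
    obtain ⟨hAt, hBt, ht0, ht1⟩ := hb
    have hApos : 0 < A t := lt_of_lt_of_le (by positivity) hAt
    have hBpos : 0 < B t := lt_of_lt_of_le (by positivity) hBt
    have hAB : t ^ 4 / 12 ≤ A t * B t := by
      have h := mul_le_mul hAt hBt (by positivity : (0:ℝ) ≤ t ^ 3 / 6) hApos.le
      rw [show t / 2 * (t ^ 3 / 6) = t ^ 4 / 12 from by ring] at h
      exact h
    have hABpos : 0 < A t * B t := mul_pos hApos hBpos
    have key : q t - (3/4 - 3 * c₀ / 16 * t)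
        = (σyz t ^ 2 - (3/4 - 3 * c₀ / 16 * t) * (A t * B t)) / (A t * B t) := by
      simp only [hqdef]
      rw [eq_div_iff hABpos.ne', sub_mul, div_mul_cancel₀ _ hABpos.ne']
    rw [Real.norm_eq_abs, Real.norm_eq_abs, key, abs_div, abs_of_pos hABpos]
    rw [Real.norm_eq_abs, Real.norm_eq_abs,
      abs_of_nonneg (by positivity : (0:ℝ) ≤ t ^ 5)] at hNt
    have step : |σyz t ^ 2 - (3/4 - 3 * c₀ / 16 * t) * (A t * B t)| / (A t * B t)
        ≤ (ε / 12 * t ^ 5) / (t ^ 4 / 12) :=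
      div_le_div₀ (by positivity) hNt (by positivity) hAB
    refine step.trans ?_
    rw [abs_of_pos ht0]
    have heq : (ε / 12 * t ^ 5) / (t ^ 4 / 12) = ε * t := by
      rw [div_eq_iff (by positivity : (0:ℝ) < t ^ 4 / 12).ne']
      ring
    rw [heq]
  have hqT : Tendsto q l (nhds (3/4)) := by
    have h0 : Tendsto (fun t => q t - (3/4 - 3 * c₀ / 16 * t)) l (nhds 0) := by
      rw [← isLittleO_one_iff ℝ]
      exact hq.trans_isBigO ((tendsto_id.mono_right nhdsWithin_le_nhds).isBigO_one ℝ)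
    have hP : Tendsto (fun t : ℝ => 3/4 - 3 * c₀ / 16 * t) l (nhds (3/4)) := by
      have h := ((by fun_prop : Continuous fun t : ℝ => 3/4 - 3 * c₀ / 16 * t).tendsto 0).mono_left
        (nhdsWithin_le_nhds : l ≤ nhds 0)
      norm_num at h
      exact h
    have h2 := h0.add hP
    rw [show (fun t => (q t - (3/4 - 3 * c₀ / 16 * t)) + (3/4 - 3 * c₀ / 16 * t)) = q
      from funext fun t => by ring, zero_add] at h2
    exact h2
  -- sqrt expansion
  have h34 : Real.sqrt (3/4) = Real.sqrt 3 / 2 := by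
    rw [show (3/4:ℝ) = 3 / 2 ^ 2 by norm_num, Real.sqrt_div (by norm_num : (0:ℝ) ≤ 3),
      Real.sqrt_sq (by norm_num : (0:ℝ) ≤ 2)]
  have h3 : Real.sqrt 3 * Real.sqrt 3 = 3 := Real.mul_self_sqrt (by norm_num)
  have h3pos : 0 < Real.sqrt 3 := Real.sqrt_pos.2 (by norm_num)
  have hds := hasDerivAt_iff_isLittleO.mp (Real.hasDerivAt_sqrt (by norm_num : (3/4:ℝ) ≠ 0))
  have hX := (hds.comp_tendsto hqT).trans_isBigO (?_ : (fun t => q t - 3/4) =O[l] fun t => t)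
  swap
  · have h1 : (fun t : ℝ => -(3 * c₀ / 16) * t) =O[l] fun t => t := isBigO_const_mul_self _ _ _
    exact (hq.isBigO.add h1).congr (fun t => by ring) (fun t => rfl)
  -- final expansion of sqrt q
  have hsqrt_exp : (fun t => Real.sqrt (q t) - Real.sqrt 3 / 2 * (1 - c₀ / 8 * t))
      =o[l] fun t => t := by
    have hinv : 1 / (2 * Real.sqrt (3/4)) = Real.sqrt 3 / 3 := by
      rw [h34, show (2:ℝ) * (Real.sqrt 3 / 2) = Real.sqrt 3 by ring,
        div_eq_div_iff h3pos.ne' (by norm_num : (3:ℝ) ≠ 0)]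
      linarith [h3]
    have hsum := hX.add (hq.const_mul_left (1 / (2 * Real.sqrt (3/4))))
    refine hsum.congr (fun t => ?_) (fun t => rfl)
    simp only [Function.comp_apply, smul_eq_mul]
    rw [hinv, h34]
    ring
  -- eventual equality of ρ and sqrt q
  have hev : ∀ᶠ t in l, ρ t = Real.sqrt (q t) := by
    filter_upwards [hδA] with t hb
    obtain ⟨hAt, hBt, ht0, _⟩ := hb
    have hApos : 0 < A t := lt_of_lt_of_le (by positivity) hAt
    have hBpos : 0 < B t := lt_of_lt_of_le (by positivity) hBt
    have hCnn : 0 ≤ σyz t := by rw [hσyz]; positivity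
    rw [hρ t, hσy t, hσz t, hqdef]
    rw [show Real.sqrt (intervalIntegral gy 0 t MeasureTheory.volume) *
      Real.sqrt (1 / ω ^ 2 * ∫ s in (0:ℝ)..t, Real.exp (-c₀ * s) * Real.sin (ω * s) ^ 2)
      = Real.sqrt (A t * B t) from (Real.sqrt_mul hApos.le _).symm]
    rw [Real.sqrt_div (sq_nonneg _), Real.sqrt_sq hCnn]
  refine ⟨?_, ?_⟩
  · have hfin : (fun t => ρ t - Real.sqrt 3 / 2 * (1 - c₀ / 8 * t)) =o[l] fun t => t :=
      hsqrt_exp.congr' (hev.mono fun t ht => by simp only [ht]) EventuallyEq.rfl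
    have h0 : Tendsto (fun t => ρ t - Real.sqrt 3 / 2 * (1 - c₀ / 8 * t)) l (nhds 0) := by
      rw [← isLittleO_one_iff ℝ]
      exact hfin.trans_isBigO ((tendsto_id.mono_right nhdsWithin_le_nhds).isBigO_one ℝ)
    have hP : Tendsto (fun t : ℝ => Real.sqrt 3 / 2 * (1 - c₀ / 8 * t)) l
        (nhds (Real.sqrt 3 / 2)) := by
      have h := ((by fun_prop : Continuous fun t : ℝ => Real.sqrt 3 / 2 * (1 - c₀ / 8 * t)).tendsto
        0).mono_left (nhdsWithin_le_nhds : l ≤ nhds 0)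
      norm_num at h
      exact h
    have h2 := h0.add hP
    rw [show (fun t => (ρ t - Real.sqrt 3 / 2 * (1 - c₀ / 8 * t)) +
        Real.sqrt 3 / 2 * (1 - c₀ / 8 * t)) = ρ from funext fun t => by ring, zero_add] at h2
    exact h2
  · exact hsqrt_exp.congr' (hev.mono fun t ht => by simp only [ht]) EventuallyEq.rfl
end
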